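/- A subset A of a perfect Polish space X is countably perfectly meager in X if and only if A is an s₀-set and for every sequence {K_n : n ∈ ℕ} of pairwise disjoint Cantor sets in X, each disjoint from A, there exist closed sets F_n in X with A ⊆ ⋃_n F_n and K_m ⊄ F_n for all m, n. -/

import Mathlib

open Set

/-- An `Fσ` set: a countable union of closed sets. -/
def IsFsigma {X : Type*} [TopologicalSpace X] (F : Set X) : Prop :=
  ∃ s : ℕ → Set X, (∀ n, IsClosed (s n)) ∧ F = ⋃ n, s n

/-- A perfect set in the classical sense: nonempty, closed, without isolated points. -/
def PerfectSet {X : Type*} [TopologicalSpace X] (P : Set X) : Prop :=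
  Perfect P ∧ P.Nonempty

/-- A Cantor set: a subset homeomorphic to the Cantor space `2^ℕ`
(hence nonempty and compact). -/
def IsCantorSet {X : Type*} [TopologicalSpace X] (K : Set X) : Prop :=
  Nonempty ((ℕ → Bool) ≃ₜ K)

/-- `F` is meager relative to the subspace `P`. -/
def MeagerIn {X : Type*} [TopologicalSpace X] (F P : Set X) : Prop :=
  IsMeagre ((↑) ⁻¹' F : Set P)

/-- `A` is countably perfectly meager in `X`. -/
def CPM {X : Type*} [TopologicalSpace X] (A : Set X) : Prop :=
  ∀ P : ℕ → Set X, (∀ n, PerfectSet (P n)) →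
    ∃ F : Set X, IsFsigma F ∧ A ⊆ F ∧ ∀ n, MeagerIn F (P n)

open Filter Topology

/- ## Helper lemmas -/

lemma not_countable_cantor : ¬ Countable (ℕ → Bool) := by
  intro h
  obtain ⟨g, hg⟩ := exists_surjective_nat (ℕ → Bool)
  obtain ⟨m, hm⟩ := hg (fun n => !(g n n))
  have := congrFun hm m
  cases h' : g m m <;> rw [h'] at this <;> simp at this

section Aux

variable {X : Type*} [TopologicalSpace X]

lemma accPt_principal_iff_subtype {K : Set X} {x : X} (hx : x ∈ K) :
    AccPt x (𝓟 K) ↔ (𝓝[≠] (⟨x, hx⟩ : K)).NeBot := by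
  have himg : (Subtype.val '' ({(⟨x, hx⟩ : K)}ᶜ : Set K)) = K \ {x} := by
    ext y
    constructor
    · rintro ⟨b, hb, rfl⟩
      exact ⟨b.2, by simpa [Subtype.ext_iff] using hb⟩
    · rintro ⟨hyK, hyx⟩
      exact ⟨⟨y, hyK⟩, by simpa [Subtype.ext_iff] using hyx, rfl⟩
  have hdiff : K \ {x} = {x}ᶜ ∩ K := by rw [Set.diff_eq, Set.inter_comm]
  rw [AccPt, ← nhdsWithin_inter', nhdsWithin_subtype, himg, hdiff]
  constructor
  · intro h
    rw [Filter.comap_neBot_iff]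
    intro t ht
    have : t ∩ ({x}ᶜ ∩ K) ∈ 𝓝[{x}ᶜ ∩ K] x :=
      Filter.inter_mem ht self_mem_nhdsWithin
    obtain ⟨y, hyt, hyK⟩ := h.nonempty_of_mem this
    exact ⟨⟨y, hyK.2⟩, hyt⟩
  · intro h
    constructor
    intro hbot
    rw [hbot, Filter.comap_bot] at h
    exact h.ne rfl

lemma perfect_subtype_nhdsNE {P : Set X} (hP : Perfect P) (a : ↥P) :
    (𝓝[≠] a).NeBot := by
  have := hP.acc a a.2
  rw [accPt_principal_iff_subtype a.2] at this
  simpa using this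

lemma cantorSpace_nhdsNE (p : ℕ → Bool) : (𝓝[≠] p).NeBot := by
  rw [← mem_closure_iff_nhdsWithin_neBot]
  have htend : Filter.Tendsto (fun k => Function.update p k (!(p k))) atTop (𝓝 p) := by
    rw [tendsto_pi_nhds]
    intro i
    apply Filter.Tendsto.congr' (f₁ := fun _ => p i)
    · filter_upwards [Filter.eventually_gt_atTop i] with k hk
      rw [Function.update_apply, if_neg (Nat.ne_of_lt hk)]
    · exact tendsto_const_nhds
  apply mem_closure_of_tendsto htend
  filter_upwards with k
  intro hmem
  have := congrFun hmem k
  simp at this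

end Aux

section Cantor

variable {X : Type*} [TopologicalSpace X]

lemma IsCantorSet.nonempty {K : Set X} (hK : IsCantorSet K) : K.Nonempty := by
  obtain ⟨e⟩ := hK
  exact ⟨(e (fun _ => false) : K), (e (fun _ => false)).2⟩

lemma IsCantorSet.isCompact {K : Set X} (hK : IsCantorSet K) : IsCompact K := by
  obtain ⟨e⟩ := hK
  haveI : CompactSpace ↥K := e.compactSpace
  exact isCompact_iff_compactSpace.mpr this

lemma IsCantorSet.not_countable {K : Set X} (hK : IsCantorSet K) : ¬ K.Countable := by
  obtain ⟨e⟩ := hK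
  intro h
  rw [← Set.countable_coe_iff] at h
  exact not_countable_cantor (Countable.of_equiv _ e.toEquiv.symm)

lemma IsCantorSet.isClosed [T2Space X] {K : Set X} (hK : IsCantorSet K) : IsClosed K :=
  hK.isCompact.isClosed

lemma IsCantorSet.perfect [T2Space X] {K : Set X} (hK : IsCantorSet K) : Perfect K := by
  have hcl := hK.isClosed
  obtain ⟨e⟩ := hK
  refine ⟨hcl, ?_⟩
  intro x hx
  rw [accPt_principal_iff_subtype hx]
  set a : ↥K := ⟨x, hx⟩
  have h1 : (𝓝[≠] (e.symm a)).NeBot := cantorSpace_nhdsNE _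
  have h2 : (𝓝[≠] (e (e.symm a))).NeBot := by
    have hmap : Filter.map e (𝓝[≠] (e.symm a)) = 𝓝[({e (e.symm a)}ᶜ)] (e (e.symm a)) := by
      rw [e.isEmbedding.map_nhdsWithin_eq]
      congr 1
      · rw [Set.image_compl_eq e.bijective, Set.image_singleton]
    rw [← hmap]
    exact Filter.NeBot.map h1 e
  simpa using h2

lemma isCantorSet_range [T2Space X] {f : (ℕ → Bool) → X} (hc : Continuous f)
    (hi : Function.Injective f) : IsCantorSet (Set.range f) := by
  let e : (ℕ → Bool) ≃ Set.range f := Equiv.ofInjective f hi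
  have hce : Continuous (e : (ℕ → Bool) → Set.range f) := by
    apply Continuous.subtype_mk hc
  exact ⟨hce.homeoOfEquivCompactToT2⟩

/-- Shrink a Cantor set to avoid a countable set. -/
lemma IsCantorSet.avoid_countable [T2Space X] {C : Set X} (hC : IsCantorSet C)
    {S : Set X} (hS : S.Countable) : ∃ K, K ⊆ C \ S ∧ IsCantorSet K := by
  obtain ⟨e⟩ := hC
  set g : (ℕ → Bool) → X := fun z => (e z : X) with hg
  have hgc : Continuous g := continuous_subtype_val.comp e.continuous
  have hgi : Function.Injective g := Subtype.val_injective.comp e.injective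
  have hrange : ∀ z, g z ∈ C := fun z => (e z).2
  set M : Set (ℕ → Bool) := g ⁻¹' S with hM
  have hMc : M.Countable := hS.preimage hgi
  obtain ⟨m, hm⟩ : ∃ m : ℕ → (ℕ → Bool), M ⊆ Set.range m := by
    rcases M.eq_empty_or_nonempty with h | h
    · exact ⟨fun _ _ => true, by simp [h]⟩
    · obtain ⟨m, hm⟩ := hMc.exists_eq_range h
      exact ⟨m, hm.le⟩
  set φ : (ℕ → Bool) → (ℕ → Bool) := fun x j => if j % 2 = 0 then x (j / 2) else !(m (j / 2) j)
    with hφ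
  have hφc : Continuous φ := by
    apply continuous_pi
    intro j
    by_cases h : j % 2 = 0 <;> simp only [hφ, h, if_true, if_false, reduceIte]
    · exact continuous_apply _
    · exact continuous_const
  have hφi : Function.Injective φ := by
    intro x y hxy
    funext k
    have := congrFun hxy (2 * k)
    simpa [hφ, Nat.mul_div_cancel_left] using this
  have hφm : ∀ x k, φ x ≠ m k := by
    intro x k h
    have := congrFun h (2 * k + 1)
    have h2 : (2 * k + 1) % 2 = 1 := by omega
    have h3 : (2 * k + 1) / 2 = k := by omega
    rw [hφ] at this
    simp only [h2, h3] at this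
    simp at this
  refine ⟨Set.range (g ∘ φ), ?_, isCantorSet_range (hgc.comp hφc) (hgi.comp hφi)⟩
  rintro _ ⟨x, rfl⟩
  refine ⟨hrange _, ?_⟩
  intro hmem
  have : φ x ∈ M := hmem
  obtain ⟨k, hk⟩ := hm this
  exact hφm x k hk.symm

end Cantor

section Meager

variable {Y : Type*} [TopologicalSpace Y]

lemma isMeagre_of_isClosed_interior_empty {s : Set Y} (hs : IsClosed s)
    (hi : interior s = ∅) : IsMeagre s :=
  residual_of_dense_open hs.isOpen_compl (interior_eq_empty_iff_dense_compl.mp hi)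

lemma IsMeagre.union' {s t : Set Y} (hs : IsMeagre s) (ht : IsMeagre t) :
    IsMeagre (s ∪ t) := by
  rw [IsMeagre, Set.compl_union]
  exact Filter.inter_mem hs ht

lemma countable_isMeagre [T1Space Y] (hY : ∀ y : Y, (𝓝[≠] y).NeBot)
    {s : Set Y} (hs : s.Countable) : IsMeagre s := by
  have hsing : ∀ y : Y, IsMeagre ({y} : Set Y) := by
    intro y
    apply isMeagre_of_isClosed_interior_empty isClosed_singleton
    by_contra h
    obtain ⟨z, hz⟩ := Set.nonempty_iff_ne_empty.mpr h
    have hzy : z ∈ ({y} : Set Y) := interior_subset hz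
    rw [Set.mem_singleton_iff] at hzy
    subst hzy
    have hnhds : ({z} : Set Y) ∈ 𝓝 z := mem_interior_iff_mem_nhds.mp hz
    have h1 : ({z} : Set Y) ∈ 𝓝[≠] z := mem_nhdsWithin_of_mem_nhds hnhds
    obtain ⟨w, hw1, hw2⟩ := (hY z).nonempty_of_mem (Filter.inter_mem h1 self_mem_nhdsWithin)
    exact hw2 hw1
  rcases s.eq_empty_or_nonempty with h | h
  · rw [h]; exact IsMeagre.empty
  · obtain ⟨f, hf⟩ := hs.exists_eq_range h
    have : s ⊆ ⋃ n, {f n} := by rw [hf]; simp [Set.range]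
    exact (isMeagre_iUnion (fun n => hsing (f n))).mono this

lemma not_isMeagre_univ [BaireSpace Y] [Nonempty Y] : ¬ IsMeagre (Set.univ : Set Y) := by
  intro h
  rw [IsMeagre, Set.compl_univ] at h
  exact (dense_of_mem_residual h).nonempty.ne_empty rfl

end Meager

section Inter

open PolishSpace

lemma cantor_in_closed_inter_open {X : Type*} [t : TopologicalSpace X] [pX : PolishSpace X]
    {P : Set X} (hP : IsClosed P) {U : ℕ → Set X} (hU : ∀ i, IsOpen (U i))
    (hunc : ¬ (P ∩ ⋂ i, U i).Countable) :
    ∃ f : (ℕ → Bool) → X, Continuous f ∧ Function.Injective f ∧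
      Set.range f ⊆ P ∩ ⋂ i, U i := by
  have h0 : IsClopenable P := hP.isClopenable
  have hUc : ∀ i, IsClopenable (U i) := fun i => (hU i).isClopenable
  obtain ⟨tP, htPle, htPpol, htPcl, -⟩ := h0
  choose tU htUle htUpol htUcl htUop using hUc
  set m : ℕ → TopologicalSpace X := fun n => Nat.casesOn n tP tU with hm
  obtain ⟨t', ht'm, ht'le, ht'pol⟩ := @exists_polishSpace_forall_le X ℕ _ t pX m
    (by rintro (_ | i); exacts [htPle, htUle i])
    (by rintro (_ | i); exacts [htPpol, htUpol i])
  have hPcl' : IsClosed[t'] P := htPcl.mono (ht'm 0)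
  have hUcl' : ∀ i, IsClosed[t'] (U i) := fun i => (htUcl i).mono (ht'm (i + 1))
  have hTcl' : IsClosed[t'] (P ∩ ⋂ i, U i) := by
    apply @IsClosed.inter X _ _ t' hPcl'
    exact @isClosed_iInter X ℕ t' _ hUcl'
  obtain ⟨f, hfr, hfc, hfi⟩ :=
    @IsClosed.exists_nat_bool_injection_of_not_countable X t' ht'pol _ hTcl' hunc
  refine ⟨f, ?_, hfi, hfr⟩
  rw [@continuous_def _ _ _ t]
  intro s hs
  have hs' : IsOpen[t'] s := IsOpen.mono hs ht'le
  exact (@continuous_def _ _ _ t' f).mp hfc s hs'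

end Inter

theorem stmt3 {X : Type*} [TopologicalSpace X] [PolishSpace X]
    (hX : Perfect (Set.univ : Set X)) (A : Set X) :
    CPM A ↔
      ((∀ P : Set X, PerfectSet P → ∃ K : Set X, K ⊆ P ∧ IsCantorSet K ∧ K ∩ A = ∅) ∧
        ∀ K : ℕ → Set X, (∀ n, IsCantorSet (K n)) → Pairwise (Function.onFun Disjoint K) →
          (∀ n, Disjoint (K n) A) →
          ∃ F : ℕ → Set X, (∀ n, IsClosed (F n)) ∧ A ⊆ ⋃ n, F n ∧
            ∀ m n, ¬ K m ⊆ F n) := by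
  letI := TopologicalSpace.upgradeIsCompletelyMetrizable X
  constructor
  · intro hcpm
    constructor
    · -- A is an s₀-set
      intro P hP
      obtain ⟨F, ⟨s, hscl, hFeq⟩, hAF, hmeag⟩ := hcpm (fun _ => P) (fun _ => hP)
      have hPc : IsClosed P := hP.1.closed
      have hunc : ¬ (P ∩ ⋂ i, (s i)ᶜ).Countable := by
        intro hc
        haveI : CompleteSpace ↥P := hPc.completeSpace_coe
        haveI : Nonempty ↥P := hP.2.to_subtype
        have hnb : ∀ a : ↥P, (𝓝[≠] a).NeBot := perfect_subtype_nhdsNE hP.1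
        have h1 : IsMeagre ((↑) ⁻¹' F : Set P) := hmeag 0
        have h2 : IsMeagre ((↑) ⁻¹' (P ∩ ⋂ i, (s i)ᶜ) : Set P) :=
          countable_isMeagre hnb (hc.preimage Subtype.val_injective)
        have huniv : (Set.univ : Set ↥P) ⊆
            ((↑) ⁻¹' F) ∪ ((↑) ⁻¹' (P ∩ ⋂ i, (s i)ᶜ)) := by
          intro a _
          by_cases h : (a : X) ∈ F
          · exact Or.inl h
          · refine Or.inr ⟨a.2, ?_⟩
            rw [Set.mem_iInter]
            intro i hsi
            exact h (by rw [hFeq]; exact Set.mem_iUnion.mpr ⟨i, hsi⟩)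
        exact not_isMeagre_univ ((h1.union' h2).mono huniv)
      obtain ⟨f, hfc, hfi, hfr⟩ :=
        cantor_in_closed_inter_open hPc (fun i => (hscl i).isOpen_compl) hunc
      refine ⟨Set.range f, fun y hy => (hfr hy).1, isCantorSet_range hfc hfi, ?_⟩
      rw [Set.eq_empty_iff_forall_notMem]
      rintro x ⟨hx1, hx2⟩
      have hxF : x ∈ F := hAF hx2
      rw [hFeq] at hxF
      obtain ⟨i, hi⟩ := Set.mem_iUnion.mp hxF
      exact (Set.mem_iInter.mp (hfr hx1).2 i) hi
    · -- closed covering condition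
      intro K hK hd hKA
      obtain ⟨F, ⟨s, hscl, hFeq⟩, hAF, hmeag⟩ :=
        hcpm K (fun n => ⟨(hK n).perfect, (hK n).nonempty⟩)
      refine ⟨s, hscl, by rw [← hFeq]; exact hAF, ?_⟩
      intro mm nn hsub
      haveI : CompleteSpace ↥(K mm) := (hK mm).isClosed.completeSpace_coe
      haveI : Nonempty ↥(K mm) := (hK mm).nonempty.to_subtype
      have h1 : IsMeagre ((↑) ⁻¹' F : Set (K mm)) := hmeag mm
      refine not_isMeagre_univ (Y := ↥(K mm)) (h1.mono ?_)
      intro a _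
      have : (a : X) ∈ s nn := hsub a.2
      show (a : X) ∈ F
      rw [hFeq]
      exact Set.mem_iUnion.mpr ⟨nn, this⟩
  · rintro ⟨h1, h2⟩
    intro P hP
    haveI hne : Nonempty X := ⟨(hP 0).2.some⟩
    obtain ⟨Δ, hΔc, hΔd⟩ := TopologicalSpace.exists_countable_dense X
    obtain ⟨d, hd⟩ := hΔc.exists_eq_range hΔd.nonempty
    have hsep : ∀ n, ∃ Sn : Set X, Sn.Countable ∧ Sn ⊆ P n ∧ P n ⊆ closure Sn := by
      intro n
      obtain ⟨tS, htSc, htSd⟩ := TopologicalSpace.exists_countable_dense ↥(P n)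
      refine ⟨(↑) '' tS, htSc.image _, ?_, Subtype.dense_iff.mp htSd⟩
      rintro _ ⟨a, _, rfl⟩; exact a.2
    choose Sn hSnc hSnP hSncl using hsep
    set S : Set X := ⋃ n, Sn n with hS
    have hSc : S.Countable := Set.countable_iUnion hSnc
    have key : ∀ (n i r : ℕ) (G : Set X), IsCompact G → G ∩ S = ∅ →
        ∃ D : Set X, IsCantorSet D ∧ D ∩ A = ∅ ∧ D ∩ S = ∅ ∧ D ∩ G = ∅ ∧
          ((Metric.ball (d i) (1/((r:ℝ)+1)) ∩ P n).Nonempty →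
            D ⊆ Metric.ball (d i) (1/((r:ℝ)+1)) ∩ P n) := by
      intro n i r G hGc hGS
      have hGcl : IsClosed G := hGc.isClosed
      by_cases hO : (Metric.ball (d i) (1/((r:ℝ)+1)) ∩ P n).Nonempty
      · have hex : ∃ x, (x ∈ Metric.ball (d i) (1/((r:ℝ)+1)) ∩ P n) ∧ x ∉ G := by
          by_contra h
          push_neg at h
          obtain ⟨x₀, hx₀O, hx₀P⟩ := hO
          have hx₀cl : x₀ ∈ closure (Sn n) := hSncl n hx₀P
          rw [mem_closure_iff] at hx₀cl
          obtain ⟨y, hyO, hyS⟩ := hx₀cl _ Metric.isOpen_ball hx₀O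
          have hyG : y ∈ G := h y ⟨hyO, hSnP n hyS⟩
          have : y ∈ G ∩ S := ⟨hyG, Set.mem_iUnion.mpr ⟨n, hyS⟩⟩
          rw [hGS] at this
          exact this
        obtain ⟨x, ⟨hxO, hxP⟩, hxG⟩ := hex
        have hopen : IsOpen (Metric.ball (d i) (1/((r:ℝ)+1)) \ G) :=
          Metric.isOpen_ball.sdiff hGcl
        obtain ⟨ε, εpos, hball⟩ := Metric.isOpen_iff.mp hopen x ⟨hxO, hxG⟩
        have hε2 : (0:ℝ) < ε/2 := by linarith
        have hQ := (hP n).1.closure_nhds_inter x hxP (Metric.mem_ball_self hε2)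
          Metric.isOpen_ball
        set Q := closure (Metric.ball x (ε/2) ∩ P n) with hQdef
        have hQball : Q ⊆ Metric.ball x ε := by
          calc Q ⊆ closure (Metric.ball x (ε/2)) := closure_mono Set.inter_subset_left
          _ ⊆ Metric.closedBall x (ε/2) := Metric.closure_ball_subset_closedBall
          _ ⊆ Metric.ball x ε := Metric.closedBall_subset_ball (by linarith)
        have hQP : Q ⊆ P n := by
          have h' := closure_mono (Set.inter_subset_right :
            Metric.ball x (ε/2) ∩ P n ⊆ P n)
          rwa [(hP n).1.closed.closure_eq] at h'
        obtain ⟨C, hCQ, hCc, hCA⟩ := h1 Q ⟨hQ.1, hQ.2⟩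
        obtain ⟨D, hDsub, hDc⟩ := hCc.avoid_countable hSc
        have hDC : D ⊆ C := fun z hz => (hDsub hz).1
        refine ⟨D, hDc, ?_, ?_, ?_, fun _ => ?_⟩
        · rw [← Set.subset_empty_iff, ← hCA]
          exact Set.inter_subset_inter_left _ hDC
        · rw [Set.eq_empty_iff_forall_notMem]
          rintro z ⟨hz1, hz2⟩
          exact (hDsub hz1).2 hz2
        · rw [Set.eq_empty_iff_forall_notMem]
          rintro z ⟨hz1, hz2⟩
          exact (hball (hQball (hCQ (hDC hz1)))).2 hz2
        · intro z hz
          have hzQ : z ∈ Q := hCQ (hDC hz)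
          exact ⟨(hball (hQball hzQ)).1, hQP hzQ⟩
      · have hSn0 : (Sn 0).Nonempty := by
          obtain ⟨z, hz⟩ := (hP 0).2
          have hzc := hSncl 0 hz
          by_contra h
          rw [Set.not_nonempty_iff_eq_empty] at h
          rw [h, closure_empty] at hzc
          exact hzc
        obtain ⟨y, hy⟩ := hSn0
        have hyS : y ∈ S := Set.mem_iUnion.mpr ⟨0, hy⟩
        have hyG : y ∈ Gᶜ := by
          intro hyG'
          have : y ∈ G ∩ S := ⟨hyG', hyS⟩
          rw [hGS] at this
          exact this
        obtain ⟨ε, εpos, hball⟩ := Metric.isOpen_iff.mp hGcl.isOpen_compl y hyG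
        have hε2 : (0:ℝ) < ε/2 := by linarith
        have hQ := hX.closure_nhds_inter y (Set.mem_univ y) (Metric.mem_ball_self hε2)
          Metric.isOpen_ball
        set Q := closure (Metric.ball y (ε/2) ∩ Set.univ) with hQdef
        have hQball : Q ⊆ Metric.ball y ε := by
          calc Q ⊆ closure (Metric.ball y (ε/2)) := closure_mono Set.inter_subset_left
          _ ⊆ Metric.closedBall y (ε/2) := Metric.closure_ball_subset_closedBall
          _ ⊆ Metric.ball y ε := Metric.closedBall_subset_ball (by linarith)
        obtain ⟨C, hCQ, hCc, hCA⟩ := h1 Q ⟨hQ.1, hQ.2⟩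
        obtain ⟨D, hDsub, hDc⟩ := hCc.avoid_countable hSc
        have hDC : D ⊆ C := fun z hz => (hDsub hz).1
        refine ⟨D, hDc, ?_, ?_, ?_, fun habs => absurd habs hO⟩
        · rw [← Set.subset_empty_iff, ← hCA]
          exact Set.inter_subset_inter_left _ hDC
        · rw [Set.eq_empty_iff_forall_notMem]
          rintro z ⟨hz1, hz2⟩
          exact (hDsub hz1).2 hz2
        · rw [Set.eq_empty_iff_forall_notMem]
          rintro z ⟨hz1, hz2⟩
          exact hball (hQball (hCQ (hDC hz1))) hz2
    -- enumerate demands and recursively construct the disjoint family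
    set E : ℕ ≃ ℕ × ℕ × ℕ := (Denumerable.eqv (ℕ × ℕ × ℕ)).symm with hE
    set tgt : ℕ → Set X := fun j =>
      Metric.ball (d (E j).2.1) (1/(((E j).2.2 : ℝ)+1)) ∩ P (E j).1 with htgt
    have key' : ∀ (j : ℕ) (G : Set X), IsCompact G → G ∩ S = ∅ →
        ∃ D : Set X, IsCantorSet D ∧ D ∩ A = ∅ ∧ D ∩ S = ∅ ∧ D ∩ G = ∅ ∧
          ((tgt j).Nonempty → D ⊆ tgt j) :=
      fun j G => key (E j).1 (E j).2.1 (E j).2.2 G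
    let GP : ℕ → {G : Set X // IsCompact G ∧ G ∩ S = ∅} := fun j =>
      Nat.rec ⟨∅, isCompact_empty, by simp⟩
        (fun i p => ⟨p.1 ∪ (key' i p.1 p.2.1 p.2.2).choose,
          p.2.1.union (key' i p.1 p.2.1 p.2.2).choose_spec.1.isCompact,
          by
            have hA := p.2.2
            have hB := (key' i p.1 p.2.1 p.2.2).choose_spec.2.2.1
            rw [Set.eq_empty_iff_forall_notMem]
            rintro z ⟨hzu, hz2⟩
            rcases hzu with h | h
            · have hz : z ∈ ↑p ∩ S := ⟨h, hz2⟩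
              rw [hA] at hz
              exact hz
            · have hz : z ∈ (key' i p.1 p.2.1 p.2.2).choose ∩ S := ⟨h, hz2⟩
              rw [hB] at hz
              exact hz⟩) j
    let D : ℕ → Set X := fun j => (key' j (GP j).1 (GP j).2.1 (GP j).2.2).choose
    have hspec : ∀ j, IsCantorSet (D j) ∧ D j ∩ A = ∅ ∧ D j ∩ S = ∅ ∧
        D j ∩ (GP j).1 = ∅ ∧ ((tgt j).Nonempty → D j ⊆ tgt j) :=
      fun j => (key' j (GP j).1 (GP j).2.1 (GP j).2.2).choose_spec
    have hGsucc : ∀ j, (GP (j+1)).1 = (GP j).1 ∪ D j := fun j => rfl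
    have hGmono : Monotone (fun j => (GP j).1) := by
      apply monotone_nat_of_le_succ
      intro j
      rw [hGsucc]
      exact Set.subset_union_left
    have hDG : ∀ i j, i < j → D i ⊆ (GP j).1 := by
      intro i j hij
      have h1' : D i ⊆ (GP (i+1)).1 := by
        rw [hGsucc]
        exact Set.subset_union_right
      exact h1'.trans (hGmono hij)
    have hdisj : Pairwise (Function.onFun Disjoint D) := by
      have hbase : ∀ i j, i < j → Disjoint (D i) (D j) := by
        intro i j hij
        rw [Set.disjoint_left]
        intro z hzi hzj
        have : z ∈ D j ∩ (GP j).1 := ⟨hzj, hDG i j hij hzi⟩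
        rw [(hspec j).2.2.2.1] at this
        exact this
      intro i j hij
      rcases hij.lt_or_gt with h | h
      · exact hbase i j h
      · exact (hbase j i h).symm
    obtain ⟨F, hFcl, hAF, hFK⟩ := h2 D (fun j => (hspec j).1) hdisj
      (fun j => Set.disjoint_iff_inter_eq_empty.mpr (hspec j).2.1)
    refine ⟨⋃ nn, F nn, ⟨F, hFcl, rfl⟩, hAF, ?_⟩
    intro n
    show IsMeagre ((↑) ⁻¹' (⋃ nn, F nn) : Set (P n))
    rw [Set.preimage_iUnion]
    apply isMeagre_iUnion
    intro k
    apply isMeagre_of_isClosed_interior_empty ((hFcl k).preimage continuous_subtype_val)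
    by_contra hint
    obtain ⟨a, ha⟩ := Set.nonempty_iff_ne_empty.mpr hint
    obtain ⟨O, hOsub, hOopen, haO⟩ := mem_interior.mp ha
    obtain ⟨W, hWopen, hWeq⟩ := isOpen_induced_iff.mp hOopen
    set x : X := (a : X) with hx
    have hxW : x ∈ W := by
      have : a ∈ (Subtype.val ⁻¹' W : Set (P n)) := by rw [hWeq]; exact haO
      exact this
    obtain ⟨ε, εpos, hball⟩ := Metric.isOpen_iff.mp hWopen x hxW
    have hε2 : (0:ℝ) < ε/2 := by linarith
    obtain ⟨r, hr⟩ := exists_nat_one_div_lt hε2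
    have hrpos : (0:ℝ) < 1/((r:ℝ)+1) := by positivity
    obtain ⟨y, hyb, hyΔ⟩ := Metric.dense_iff.mp hΔd x _ hrpos
    obtain ⟨i, rfl⟩ : ∃ i, d i = y := by
      rw [hd] at hyΔ
      exact hyΔ
    have hx_in : x ∈ Metric.ball (d i) (1/((r:ℝ)+1)) := by
      rw [Metric.mem_ball, dist_comm]
      exact hyb
    have hsub2 : Metric.ball (d i) (1/((r:ℝ)+1)) ⊆ W := by
      intro z hz
      apply hball
      rw [Metric.mem_ball]
      have h1' : dist z (d i) < 1/((r:ℝ)+1) := hz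
      have h2' : dist x (d i) < 1/((r:ℝ)+1) := hx_in
      calc dist z x ≤ dist z (d i) + dist (d i) x := dist_triangle _ _ _
      _ = dist z (d i) + dist x (d i) := by rw [dist_comm (d i) x]
      _ < 1/((r:ℝ)+1) + 1/((r:ℝ)+1) := by linarith
      _ < ε := by linarith
    set j := E.symm (n, i, r) with hj
    have hEj : E j = (n, i, r) := E.apply_symm_apply _
    have htgtj : tgt j = Metric.ball (d i) (1/((r:ℝ)+1)) ∩ P n := by
      rw [htgt]
      simp only [hEj]
    have hne2 : (tgt j).Nonempty := ⟨x, by rw [htgtj]; exact ⟨hx_in, a.2⟩⟩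
    have hDj := (hspec j).2.2.2.2 hne2
    apply hFK j k
    intro z hz
    have hzt := hDj hz
    rw [htgtj] at hzt
    have hzP : z ∈ P n := hzt.2
    have hzW : z ∈ W := hsub2 hzt.1
    have : (⟨z, hzP⟩ : ↥(P n)) ∈ O := by
      rw [← hWeq]
      exact hzW
    exact hOsub this
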